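/- For every integer k with 1 ≤ k ≤ 6 and every σ > 0 there exists θ₀ ∈ (π/2, π) such that for every θ ∈ (π/2, θ₀] there exists κ₀ > 0 with: for every κ ≥ κ₀ there is a constant c > 0 such that for all τ ∈ (0,1] with κ·τ·sin θ ≤ π and all z ∈ Γ^τ_{θ,κ}, one has |δ_τ(e^{−(σ+z)τ})/δ_τ(e^{−zτ}) − (σ+z)/z| ≤ c·τ^k·(|σ+z|^{k+1}·|z|^{−1} + |σ+z|·|z|^{k−1}), and moreover this quantity is ≤ c·τ^k·|z|^k. -/

import Mathlib

open Real

/-- Generating polynomial of the k-step BDF method: δ(ξ) = ∑_{j=1}^{k} (1/j)(1−ξ)^j. -/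
noncomputable def bdfDelta (k : ℕ) (ξ : ℂ) : ℂ :=
  ∑ j ∈ Finset.Icc 1 k, (1 / (j : ℂ)) * (1 - ξ) ^ j

/-- Truncated sectorial contour Γ^τ_{θ,κ}. -/
noncomputable def contourTrunc (θ κ τ : ℝ) : Set ℂ :=
  {z : ℂ | ‖z‖ = κ ∧ |z.arg| ≤ θ} ∪
    {z : ℂ | ∃ r : ℝ, κ ≤ r ∧ r ≤ π / (τ * Real.sin θ) ∧
      (z = (r : ℂ) * Complex.exp (θ * Complex.I) ∨
        z = (r : ℂ) * Complex.exp (-θ * Complex.I))}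

open Complex Finset


lemma abs_ge_sub (v α : ℂ) : ‖α‖ - ‖v‖ ≤ ‖v - α‖ := by
  simpa [norm_sub_rev] using norm_sub_norm_le α v

lemma abs_add_lower (X E : ℂ) : ‖X‖ - ‖E‖ ≤ ‖X + E‖ := by
  have h := abs_ge_sub (-E) X
  rw [norm_neg] at h
  calc ‖X‖ - ‖E‖ ≤ ‖-E - X‖ := h
    _ = ‖X + E‖ := by rw [show -E - X = -(X+E) by ring, norm_neg]

lemma prod3_le {a1 a2 a3 b1 b2 b3 : ℝ} (h1 : a1 ≤ b1) (h2 : a2 ≤ b2) (h3 : a3 ≤ b3)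
    (n1 : 0 ≤ a1) (n2 : 0 ≤ a2) (n3 : 0 ≤ a3) : a1*a2*a3 ≤ b1*b2*b3 := by
  have h12 : a1*a2 ≤ b1*b2 := mul_le_mul h1 h2 n2 (n1.trans h1)
  exact mul_le_mul h12 h3 n3 (mul_nonneg (n1.trans h1) (n2.trans h2))

lemma quad_lower (b c s R : ℝ) (hb : b^2 ≤ 4*c) (hs : s^2 ≤ c) (hs0 : 0 ≤ s) (hsR : R ≤ s)
    (v : ℂ) (hv : ‖v‖ ≤ R) :
    (s - R)^2 ≤ ‖v^2 + b*v + c‖ := by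
  set t : ℝ := Real.sqrt (4*c - b^2) / 2 with ht
  set α : ℂ := ⟨-b/2, t⟩ with hα
  set β : ℂ := ⟨-b/2, -t⟩ with hβ
  have ht2 : t^2 = (4*c - b^2)/4 := by
    rw [ht, div_pow, Real.sq_sqrt (by linarith)]; ring
  have hfac : v^2 + (b:ℂ)*v + (c:ℂ) = (v - α) * (v - β) := by
    have h1 : α + β = (-b : ℂ) := by apply Complex.ext <;> simp [hα, hβ]
    have h2 : α * β = (c : ℂ) := by
      apply Complex.ext <;> simp [hα, hβ, Complex.mul_re, Complex.mul_im]
      · nlinarith [ht2]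
      · ring
    have : (v - α) * (v - β) = v^2 - (α + β)*v + α*β := by ring
    rw [this, h1, h2]; ring
  have habsα : ‖α‖ = Real.sqrt c := by
    rw [Complex.norm_def, Complex.normSq_mk]; congr 1; nlinarith [ht2]
  have habsβ : ‖β‖ = Real.sqrt c := by
    rw [Complex.norm_def, Complex.normSq_mk]; congr 1; nlinarith [ht2]
  have hsc : s ≤ Real.sqrt c := (Real.le_sqrt hs0 (by nlinarith)).mpr hs
  have l1 : s - R ≤ ‖v - α‖ := by
    have := abs_ge_sub v α; rw [habsα] at this; linarith
  have l2 : s - R ≤ ‖v - β‖ := by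
    have := abs_ge_sub v β; rw [habsβ] at this; linarith
  rw [hfac, norm_mul]
  nlinarith [norm_nonneg (v - α), norm_nonneg (v - β)]

lemma lin_lower (g R : ℝ) (hg : R ≤ g) (v : ℂ) (hv : ‖v‖ ≤ R) :
    g - R ≤ ‖v + g‖ := by
  have h := abs_ge_sub v (-(g:ℂ))
  rw [sub_neg_eq_add, norm_neg, Complex.norm_real, Real.norm_eq_abs,
    _root_.abs_of_nonneg (le_trans (norm_nonneg v) (le_trans hv hg))] at h
  linarith

lemma err_cubic (e0 e1 e2 e3 : ℂ) (m0 m1 m2 m3 R : ℝ) (hR : 0 ≤ R)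
    (h0 : ‖e0‖ ≤ m0) (h1 : ‖e1‖ ≤ m1) (h2 : ‖e2‖ ≤ m2)
    (h3 : ‖e3‖ ≤ m3) (v : ℂ) (hv : ‖v‖ ≤ R) :
    ‖e0 + e1*v + e2*v^2 + e3*v^3‖ ≤ m0 + m1 * R + m2 * R^2 + m3 * R^3 := by
  have hab : ∀ n : ℕ, ‖v^n‖ ≤ R^n := by
    intro n; rw [norm_pow]; exact pow_le_pow_left₀ (norm_nonneg v) hv n
  have g1 : ‖e1*v‖ ≤ m1 * R := by
    rw [norm_mul]
    exact mul_le_mul h1 hv (norm_nonneg v) (le_trans (norm_nonneg e1) h1)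
  have g2 : ‖e2*v^2‖ ≤ m2 * R^2 := by
    rw [norm_mul]
    exact mul_le_mul h2 (hab 2) (norm_nonneg _) (le_trans (norm_nonneg e2) h2)
  have g3 : ‖e3*v^3‖ ≤ m3 * R^3 := by
    rw [norm_mul]
    exact mul_le_mul h3 (hab 3) (norm_nonneg _) (le_trans (norm_nonneg e3) h3)
  calc ‖e0 + e1*v + e2*v^2 + e3*v^3‖
      ≤ ‖e0 + e1*v + e2*v^2‖ + ‖e3*v^3‖ := norm_add_le _ _
    _ ≤ ‖e0 + e1*v‖ + ‖e2*v^2‖ + ‖e3*v^3‖ := by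
        linarith [norm_add_le (e0 + e1*v) (e2*v^2)]
    _ ≤ ‖e0‖ + ‖e1*v‖ + ‖e2*v^2‖ + ‖e3*v^3‖ := by
        linarith [norm_add_le e0 (e1*v)]
    _ ≤ m0 + m1 * R + m2 * R^2 + m3 * R^3 := by linarith

lemma abs_num_le (a b : ℝ) (h : a = b ∨ a = -b) (hb : 0 ≤ b) : ‖(a:ℂ)‖ ≤ b := by
  rw [Complex.norm_real, Real.norm_eq_abs]
  rcases h with rfl | rfl
  · rw [_root_.abs_of_nonneg hb]
  · rw [abs_neg, _root_.abs_of_nonneg hb]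

lemma q_lower2 (v : ℂ) (hv : ‖v‖ ≤ 51/50) :
    (9791/10000 : ℝ) ≤ ‖∑ j ∈ Finset.Icc (1:ℕ) 2, (1/(j:ℂ)) * (1+v)^(j-1)‖ := by
  have key : (2:ℂ) * (∑ j ∈ Finset.Icc (1:ℕ) 2, (1/(j:ℂ)) * (1+v)^(j-1)) =
      ((v + ((3:ℝ):ℂ)))
      + (((0:ℝ):ℂ) + ((0:ℝ):ℂ)*v + ((0:ℝ):ℂ)*v^2 + ((0:ℝ):ℂ)*v^3) := by
    rw [show Finset.Icc (1:ℕ) 2 = {1,2} from rfl]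
    simp [Finset.sum_insert, Finset.mem_insert]
    push_cast
    ring
  have hl0 : (3 : ℝ) - 51/50 ≤ ‖v + ((3:ℝ):ℂ)‖ :=
    lin_lower _ _ (by norm_num) v hv
  have hPb : (989/500 : ℝ) ≤ ‖(v + ((3:ℝ):ℂ))‖ := by
    refine le_trans (by norm_num) hl0
  have hEb : ‖((0:ℝ):ℂ) + ((0:ℝ):ℂ)*v + ((0:ℝ):ℂ)*v^2 + ((0:ℝ):ℂ)*v^3‖ ≤ (0 : ℝ) := by
    refine le_trans (err_cubic _ _ _ _ (0) (0) (0) (0) (51/50) (by norm_num)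
      (abs_num_le _ _ (by norm_num) (by norm_num)) (abs_num_le _ _ (by norm_num) (by norm_num))
      (abs_num_le _ _ (by norm_num) (by norm_num)) (abs_num_le _ _ (by norm_num) (by norm_num)) v hv) (by norm_num)
  have hfin := abs_add_lower ((v + ((3:ℝ):ℂ))) (((0:ℝ):ℂ) + ((0:ℝ):ℂ)*v + ((0:ℝ):ℂ)*v^2 + ((0:ℝ):ℂ)*v^3)
  rw [← key] at hfin
  have hks : ‖(2:ℂ) * (∑ j ∈ Finset.Icc (1:ℕ) 2, (1/(j:ℂ)) * (1+v)^(j-1))‖ = 2 * ‖∑ j ∈ Finset.Icc (1:ℕ) 2, (1/(j:ℂ)) * (1+v)^(j-1)‖ := by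
    rw [norm_mul]; simp
  rw [hks] at hfin
  linarith [hfin, hPb, hEb]

lemma q_lower3 (v : ℂ) (hv : ‖v‖ ≤ 51/50) :
    (5789/10000 : ℝ) ≤ ‖∑ j ∈ Finset.Icc (1:ℕ) 3, (1/(j:ℂ)) * (1+v)^(j-1)‖ := by
  have key : (3:ℂ) * (∑ j ∈ Finset.Icc (1:ℕ) 3, (1/(j:ℂ)) * (1+v)^(j-1)) =
      ((v^2 + ((7/2:ℝ):ℂ)*v + ((11/2:ℝ):ℂ)))
      + (((0:ℝ):ℂ) + ((0:ℝ):ℂ)*v + ((0:ℝ):ℂ)*v^2 + ((0:ℝ):ℂ)*v^3) := by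
    rw [show Finset.Icc (1:ℕ) 3 = {1,2,3} from rfl]
    simp [Finset.sum_insert, Finset.mem_insert]
    push_cast
    ring
  have hq0 : ((11726039/5000000 : ℝ) - 51/50)^2 ≤ ‖v^2 + ((7/2:ℝ):ℂ)*v + ((11/2:ℝ):ℂ)‖ :=
    quad_lower _ _ (11726039/5000000) _ (by norm_num) (by norm_num) (by norm_num) (by norm_num) v hv
  have hPb : (2193/1250 : ℝ) ≤ ‖(v^2 + ((7/2:ℝ):ℂ)*v + ((11/2:ℝ):ℂ))‖ := by
    refine le_trans (by norm_num) hq0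
  have hEb : ‖((0:ℝ):ℂ) + ((0:ℝ):ℂ)*v + ((0:ℝ):ℂ)*v^2 + ((0:ℝ):ℂ)*v^3‖ ≤ (0 : ℝ) := by
    refine le_trans (err_cubic _ _ _ _ (0) (0) (0) (0) (51/50) (by norm_num)
      (abs_num_le _ _ (by norm_num) (by norm_num)) (abs_num_le _ _ (by norm_num) (by norm_num))
      (abs_num_le _ _ (by norm_num) (by norm_num)) (abs_num_le _ _ (by norm_num) (by norm_num)) v hv) (by norm_num)
  have hfin := abs_add_lower ((v^2 + ((7/2:ℝ):ℂ)*v + ((11/2:ℝ):ℂ))) (((0:ℝ):ℂ) + ((0:ℝ):ℂ)*v + ((0:ℝ):ℂ)*v^2 + ((0:ℝ):ℂ)*v^3)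
  rw [← key] at hfin
  have hks : ‖(3:ℂ) * (∑ j ∈ Finset.Icc (1:ℕ) 3, (1/(j:ℂ)) * (1+v)^(j-1))‖ = 3 * ‖∑ j ∈ Finset.Icc (1:ℕ) 3, (1/(j:ℂ)) * (1+v)^(j-1)‖ := by
    rw [norm_mul]; simp
  rw [hks] at hfin
  linarith [hfin, hPb, hEb]

lemma q_lower4 (v : ℂ) (hv : ‖v‖ ≤ 51/50) :
    (144/625 : ℝ) ≤ ‖∑ j ∈ Finset.Icc (1:ℕ) 4, (1/(j:ℂ)) * (1+v)^(j-1)‖ := by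
  have key : (4:ℂ) * (∑ j ∈ Finset.Icc (1:ℕ) 4, (1/(j:ℂ)) * (1+v)^(j-1)) =
      ((v^2 + ((1711953/1000000:ℝ):ℂ)*v + ((31789867/10000000:ℝ):ℂ)) * (v + ((26213803/10000000:ℝ):ℂ)))
      + (((67197397/300000000000000:ℝ):ℂ) + ((2938223/30000000000000:ℝ):ℂ)*v + ((1/30000000:ℝ):ℂ)*v^2 + ((0:ℝ):ℂ)*v^3) := by
    rw [show Finset.Icc (1:ℕ) 4 = {1,2,3,4} from rfl]
    simp [Finset.sum_insert, Finset.mem_insert]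
    push_cast
    ring
  have hq0 : ((1114357/625000 : ℝ) - 51/50)^2 ≤ ‖v^2 + ((1711953/1000000:ℝ):ℂ)*v + ((31789867/10000000:ℝ):ℂ)‖ :=
    quad_lower _ _ (1114357/625000) _ (by norm_num) (by norm_num) (by norm_num) (by norm_num) v hv
  have hl0 : (26213803/10000000 : ℝ) - 51/50 ≤ ‖v + ((26213803/10000000:ℝ):ℂ)‖ :=
    lin_lower _ _ (by norm_num) v hv
  have hPb : (582/625 : ℝ) ≤ ‖(v^2 + ((1711953/1000000:ℝ):ℂ)*v + ((31789867/10000000:ℝ):ℂ)) * (v + ((26213803/10000000:ℝ):ℂ))‖ := by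
    rw [show ‖(v^2 + ((1711953/1000000:ℝ):ℂ)*v + ((31789867/10000000:ℝ):ℂ)) * (v + ((26213803/10000000:ℝ):ℂ))‖ = ‖v^2 + ((1711953/1000000:ℝ):ℂ)*v + ((31789867/10000000:ℝ):ℂ)‖ * ‖v + ((26213803/10000000:ℝ):ℂ)‖ from norm_mul _ _]
    refine le_trans (by norm_num : (582/625 : ℝ) ≤ (((1114357/625000 : ℝ) - 51/50)^2) * (((26213803/10000000 : ℝ) - 51/50)))
      (mul_le_mul hq0 hl0 (by norm_num) (norm_nonneg _))
  have hEb : ‖((67197397/300000000000000:ℝ):ℂ) + ((2938223/30000000000000:ℝ):ℂ)*v + ((1/30000000:ℝ):ℂ)*v^2 + ((0:ℝ):ℂ)*v^3‖ ≤ (1/1000000 : ℝ) := by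
    refine le_trans (err_cubic _ _ _ _ (67197397/300000000000000) (2938223/30000000000000) (1/30000000) (0) (51/50) (by norm_num)
      (abs_num_le _ _ (by norm_num) (by norm_num)) (abs_num_le _ _ (by norm_num) (by norm_num))
      (abs_num_le _ _ (by norm_num) (by norm_num)) (abs_num_le _ _ (by norm_num) (by norm_num)) v hv) (by norm_num)
  have hfin := abs_add_lower ((v^2 + ((1711953/1000000:ℝ):ℂ)*v + ((31789867/10000000:ℝ):ℂ)) * (v + ((26213803/10000000:ℝ):ℂ))) (((67197397/300000000000000:ℝ):ℂ) + ((2938223/30000000000000:ℝ):ℂ)*v + ((1/30000000:ℝ):ℂ)*v^2 + ((0:ℝ):ℂ)*v^3)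
  rw [← key] at hfin
  have hks : ‖(4:ℂ) * (∑ j ∈ Finset.Icc (1:ℕ) 4, (1/(j:ℂ)) * (1+v)^(j-1))‖ = 4 * ‖∑ j ∈ Finset.Icc (1:ℕ) 4, (1/(j:ℂ)) * (1+v)^(j-1)‖ := by
    rw [norm_mul]; simp
  rw [hks] at hfin
  linarith [hfin, hPb, hEb]

lemma q_lower5 (v : ℂ) (hv : ‖v‖ ≤ 51/50) :
    (571/10000 : ℝ) ≤ ‖∑ j ∈ Finset.Icc (1:ℕ) 5, (1/(j:ℂ)) * (1+v)^(j-1)‖ := by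
  have key : (5:ℂ) * (∑ j ∈ Finset.Icc (1:ℕ) 5, (1/(j:ℂ)) * (1+v)^(j-1)) =
      ((v^2 + ((44136241/10000000:ℝ):ℂ)*v + ((3583913/625000:ℝ):ℂ)) * (v^2 + ((8363759/10000000:ℝ):ℂ)*v + ((1990957/1000000:ℝ):ℂ)))
      + (((-24223/1875000000000:ℝ):ℂ) + ((-204763/150000000000000:ℝ):ℂ)*v + ((11330243/300000000000000:ℝ):ℂ)*v^2 + ((0:ℝ):ℂ)*v^3) := by
    rw [show Finset.Icc (1:ℕ) 5 = {1,2,3,4,5} from rfl]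
    simp [Finset.sum_insert, Finset.mem_insert]
    push_cast
    ring
  have hq0 : ((5986579/2500000 : ℝ) - 51/50)^2 ≤ ‖v^2 + ((44136241/10000000:ℝ):ℂ)*v + ((3583913/625000:ℝ):ℂ)‖ :=
    quad_lower _ _ (5986579/2500000) _ (by norm_num) (by norm_num) (by norm_num) (by norm_num) v hv
  have hq1 : ((14110127/10000000 : ℝ) - 51/50)^2 ≤ ‖v^2 + ((8363759/10000000:ℝ):ℂ)*v + ((1990957/1000000:ℝ):ℂ)‖ :=
    quad_lower _ _ (14110127/10000000) _ (by norm_num) (by norm_num) (by norm_num) (by norm_num) v hv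
  have hPb : (1443/5000 : ℝ) ≤ ‖(v^2 + ((44136241/10000000:ℝ):ℂ)*v + ((3583913/625000:ℝ):ℂ)) * (v^2 + ((8363759/10000000:ℝ):ℂ)*v + ((1990957/1000000:ℝ):ℂ))‖ := by
    rw [show ‖(v^2 + ((44136241/10000000:ℝ):ℂ)*v + ((3583913/625000:ℝ):ℂ)) * (v^2 + ((8363759/10000000:ℝ):ℂ)*v + ((1990957/1000000:ℝ):ℂ))‖ = ‖v^2 + ((44136241/10000000:ℝ):ℂ)*v + ((3583913/625000:ℝ):ℂ)‖ * ‖v^2 + ((8363759/10000000:ℝ):ℂ)*v + ((1990957/1000000:ℝ):ℂ)‖ from norm_mul _ _]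
    refine le_trans (by norm_num : (1443/5000 : ℝ) ≤ (((5986579/2500000 : ℝ) - 51/50)^2) * (((14110127/10000000 : ℝ) - 51/50)^2))
      (mul_le_mul hq0 hq1 (by norm_num) (norm_nonneg _))
  have hEb : ‖((-24223/1875000000000:ℝ):ℂ) + ((-204763/150000000000000:ℝ):ℂ)*v + ((11330243/300000000000000:ℝ):ℂ)*v^2 + ((0:ℝ):ℂ)*v^3‖ ≤ (1/1000000 : ℝ) := by
    refine le_trans (err_cubic _ _ _ _ (24223/1875000000000) (204763/150000000000000) (11330243/300000000000000) (0) (51/50) (by norm_num)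
      (abs_num_le _ _ (by norm_num) (by norm_num)) (abs_num_le _ _ (by norm_num) (by norm_num))
      (abs_num_le _ _ (by norm_num) (by norm_num)) (abs_num_le _ _ (by norm_num) (by norm_num)) v hv) (by norm_num)
  have hfin := abs_add_lower ((v^2 + ((44136241/10000000:ℝ):ℂ)*v + ((3583913/625000:ℝ):ℂ)) * (v^2 + ((8363759/10000000:ℝ):ℂ)*v + ((1990957/1000000:ℝ):ℂ))) (((-24223/1875000000000:ℝ):ℂ) + ((-204763/150000000000000:ℝ):ℂ)*v + ((11330243/300000000000000:ℝ):ℂ)*v^2 + ((0:ℝ):ℂ)*v^3)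
  rw [← key] at hfin
  have hks : ‖(5:ℂ) * (∑ j ∈ Finset.Icc (1:ℕ) 5, (1/(j:ℂ)) * (1+v)^(j-1))‖ = 5 * ‖∑ j ∈ Finset.Icc (1:ℕ) 5, (1/(j:ℂ)) * (1+v)^(j-1)‖ := by
    rw [norm_mul]; simp
  rw [hks] at hfin
  linarith [hfin, hPb, hEb]

lemma q_lower6 (v : ℂ) (hv : ‖v‖ ≤ 51/50) :
    (53/10000 : ℝ) ≤ ‖∑ j ∈ Finset.Icc (1:ℕ) 6, (1/(j:ℂ)) * (1+v)^(j-1)‖ := by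
  have key : (6:ℂ) * (∑ j ∈ Finset.Icc (1:ℕ) 6, (1/(j:ℂ)) * (1+v)^(j-1)) =
      ((v^2 + ((33479173/10000000:ℝ):ℂ)*v + ((44501991/10000000:ℝ):ℂ)) * (v^2 + ((3897761/10000000:ℝ):ℂ)*v + ((13415157/10000000:ℝ):ℂ)) * (v + ((12311533/5000000:ℝ):ℂ)))
      + (((73451317089129/500000000000000000000:ℝ):ℂ) + ((-3752504163081/31250000000000000000:ℝ):ℂ)*v + ((-131111185354049/500000000000000000000:ℝ):ℂ)*v^2 + ((-7591297/100000000000000:ℝ):ℂ)*v^3) := by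
    rw [show Finset.Icc (1:ℕ) 6 = {1,2,3,4,5,6} from rfl]
    simp [Finset.sum_insert, Finset.mem_insert]
    push_cast
    ring
  have hq0 : ((10547747/5000000 : ℝ) - 51/50)^2 ≤ ‖v^2 + ((33479173/10000000:ℝ):ℂ)*v + ((44501991/10000000:ℝ):ℂ)‖ :=
    quad_lower _ _ (10547747/5000000) _ (by norm_num) (by norm_num) (by norm_num) (by norm_num) v hv
  have hq1 : ((11582381/10000000 : ℝ) - 51/50)^2 ≤ ‖v^2 + ((3897761/10000000:ℝ):ℂ)*v + ((13415157/10000000:ℝ):ℂ)‖ :=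
    quad_lower _ _ (11582381/10000000) _ (by norm_num) (by norm_num) (by norm_num) (by norm_num) v hv
  have hl0 : (12311533/5000000 : ℝ) - 51/50 ≤ ‖v + ((12311533/5000000:ℝ):ℂ)‖ :=
    lin_lower _ _ (by norm_num) v hv
  have hPb : (163/5000 : ℝ) ≤ ‖(v^2 + ((33479173/10000000:ℝ):ℂ)*v + ((44501991/10000000:ℝ):ℂ)) * (v^2 + ((3897761/10000000:ℝ):ℂ)*v + ((13415157/10000000:ℝ):ℂ)) * (v + ((12311533/5000000:ℝ):ℂ))‖ := by
    rw [show ‖(v^2 + ((33479173/10000000:ℝ):ℂ)*v + ((44501991/10000000:ℝ):ℂ)) * (v^2 + ((3897761/10000000:ℝ):ℂ)*v + ((13415157/10000000:ℝ):ℂ)) * (v + ((12311533/5000000:ℝ):ℂ))‖ = ‖(v^2 + ((33479173/10000000:ℝ):ℂ)*v + ((44501991/10000000:ℝ):ℂ)) * (v^2 + ((3897761/10000000:ℝ):ℂ)*v + ((13415157/10000000:ℝ):ℂ))‖ * ‖v + ((12311533/5000000:ℝ):ℂ)‖ from norm_mul _ _, show ‖(v^2 + ((33479173/10000000:ℝ):ℂ)*v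 + ((44501991/10000000:ℝ):ℂ)) * (v^2 + ((3897761/10000000:ℝ):ℂ)*v + ((13415157/10000000:ℝ):ℂ))‖ = ‖v^2 + ((33479173/10000000:ℝ):ℂ)*v + ((44501991/10000000:ℝ):ℂ)‖ * ‖v^2 + ((3897761/10000000:ℝ):ℂ)*v + ((13415157/10000000:ℝ):ℂ)‖ from norm_mul _ _]
    refine le_trans (by norm_num : (163/5000 : ℝ) ≤ (((10547747/5000000 : ℝ) - 51/50)^2) * (((11582381/10000000 : ℝ) - 51/50)^2) * (((12311533/5000000 : ℝ) - 51/50)))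
      (prod3_le hq0 hq1 hl0 (by norm_num) (by norm_num) (by norm_num))
  have hEb : ‖((73451317089129/500000000000000000000:ℝ):ℂ) + ((-3752504163081/31250000000000000000:ℝ):ℂ)*v + ((-131111185354049/500000000000000000000:ℝ):ℂ)*v^2 + ((-7591297/100000000000000:ℝ):ℂ)*v^3‖ ≤ (1/1000000 : ℝ) := by
    refine le_trans (err_cubic _ _ _ _ (73451317089129/500000000000000000000) (3752504163081/31250000000000000000) (131111185354049/500000000000000000000) (7591297/100000000000000) (51/50) (by norm_num)
      (abs_num_le _ _ (by norm_num) (by norm_num)) (abs_num_le _ _ (by norm_num) (by norm_num))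
      (abs_num_le _ _ (by norm_num) (by norm_num)) (abs_num_le _ _ (by norm_num) (by norm_num)) v hv) (by norm_num)
  have hfin := abs_add_lower ((v^2 + ((33479173/10000000:ℝ):ℂ)*v + ((44501991/10000000:ℝ):ℂ)) * (v^2 + ((3897761/10000000:ℝ):ℂ)*v + ((13415157/10000000:ℝ):ℂ)) * (v + ((12311533/5000000:ℝ):ℂ))) (((73451317089129/500000000000000000000:ℝ):ℂ) + ((-3752504163081/31250000000000000000:ℝ):ℂ)*v + ((-131111185354049/500000000000000000000:ℝ):ℂ)*v^2 + ((-7591297/100000000000000:ℝ):ℂ)*v^3)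
  rw [← key] at hfin
  have hks : ‖(6:ℂ) * (∑ j ∈ Finset.Icc (1:ℕ) 6, (1/(j:ℂ)) * (1+v)^(j-1))‖ = 6 * ‖∑ j ∈ Finset.Icc (1:ℕ) 6, (1/(j:ℂ)) * (1+v)^(j-1)‖ := by
    rw [norm_mul]; simp
  rw [hks] at hfin
  linarith [hfin, hPb, hEb]


lemma exp_small (x : ℝ) (hx : x ≤ 1/100) : Real.exp x ≤ 51/50 := by
  have h1 := Real.add_one_le_exp (-(1/100 : ℝ))
  have h2 : Real.exp (1/100) * Real.exp (-(1/100)) = 1 := by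
    rw [← Real.exp_add]; norm_num
  have h3 : Real.exp x ≤ Real.exp (1/100) := Real.exp_le_exp.mpr hx
  nlinarith [Real.exp_pos (1/100 : ℝ)]

lemma q_lowerAll (k : ℕ) (hk1 : 1 ≤ k) (hk6 : k ≤ 6) :
    ∃ ε > (0:ℝ), ∀ u : ℂ, ‖u - 1‖ ≤ 51/50 →
      ε ≤ ‖∑ j ∈ Finset.Icc (1:ℕ) k, (1/(j:ℂ)) * u^(j-1)‖ := by
  have conv : ∀ (m : ℕ) (ε : ℝ),
      (∀ v : ℂ, ‖v‖ ≤ 51/50 →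
        ε ≤ ‖∑ j ∈ Finset.Icc (1:ℕ) m, (1/(j:ℂ)) * (1+v)^(j-1)‖) →
      ∀ u : ℂ, ‖u - 1‖ ≤ 51/50 →
        ε ≤ ‖∑ j ∈ Finset.Icc (1:ℕ) m, (1/(j:ℂ)) * u^(j-1)‖ := by
    intro m ε h u hu
    have := h (u - 1) hu
    simpa only [show (1:ℂ) + (u - 1) = u from by ring] using this
  interval_cases k
  · refine ⟨1, by norm_num, ?_⟩
    intro u hu
    rw [show Finset.Icc (1:ℕ) 1 = {1} from rfl, Finset.sum_singleton]
    norm_num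
  · exact ⟨9791/10000, by norm_num, conv 2 _ q_lower2⟩
  · exact ⟨5789/10000, by norm_num, conv 3 _ q_lower3⟩
  · exact ⟨144/625, by norm_num, conv 4 _ q_lower4⟩
  · exact ⟨571/10000, by norm_num, conv 5 _ q_lower5⟩
  · exact ⟨53/10000, by norm_num, conv 6 _ q_lower6⟩

lemma bdf_factor (k : ℕ) (ξ : ℂ) :
    bdfDelta k ξ = (1 - ξ) * ∑ j ∈ Finset.Icc (1:ℕ) k, (1/(j:ℂ)) * (1-ξ)^(j-1) := by
  rw [bdfDelta, Finset.mul_sum]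
  apply Finset.sum_congr rfl
  intro j hj
  have h1 : 1 ≤ j := (Finset.mem_Icc.mp hj).1
  have h2 : (1-ξ)^j = (1-ξ) * (1-ξ)^(j-1) := by
    conv_lhs => rw [show j = 1 + (j-1) from by omega]
    rw [pow_add, pow_one]
  rw [h2]; ring

set_option maxHeartbeats 1000000 in
lemma one_sub_exp_lower (w : ℂ) (hre : -(1/100) ≤ w.re) (habs : ‖w‖ ≤ 63/20) :
    (1/40) * ‖w‖ ≤ ‖1 - Complex.exp (-w)‖ := by
  rcases le_or_gt (‖w‖) (1/4) with hsmall | hbig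
  · -- small case
    have hn : ‖-w‖ ≤ 1 := by rw [norm_neg]; linarith
    have h := Complex.norm_exp_sub_one_sub_id_le hn
    have htri := abs_add_lower (-w) (Complex.exp (-w) - 1 - (-w))
    rw [show -w + (Complex.exp (-w) - 1 - -w) = Complex.exp (-w) - 1 from by ring] at htri
    rw [norm_neg] at htri h
    have habs2 : ‖1 - Complex.exp (-w)‖ = ‖Complex.exp (-w) - 1‖ := by
      rw [show (1 : ℂ) - Complex.exp (-w) = -(Complex.exp (-w) - 1) from by ring, norm_neg]
    rw [habs2]
    nlinarith [norm_nonneg w]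
  · -- big case : show 1/12 ≤ abs (1 - exp (-w))
    have key : (1/12 : ℝ) ≤ ‖1 - Complex.exp (-w)‖ := by
      set x := w.re with hx
      set y := w.im with hy
      have hy1 : |y| ≤ 63/20 := le_trans (Complex.abs_im_le_norm w) habs
      have hsq : (‖1 - Complex.exp (-w)‖)^2
          = (1 - Real.exp (-x) * Real.cos y)^2 + (Real.exp (-x) * Real.sin y)^2 := by
        rw [Complex.sq_norm, Complex.normSq_apply]
        simp only [Complex.sub_re, Complex.sub_im, Complex.one_re, Complex.one_im,
          Complex.exp_re, Complex.exp_im, Complex.neg_re, Complex.neg_im,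
          Real.cos_neg, Real.sin_neg, hx, hy]
        ring
      rcases le_or_gt (1/10 : ℝ) x with hx1 | hx1
      · -- x large: abs ≥ 1 - exp(-x)
        have htri := abs_add_lower 1 (-Complex.exp (-w))
        rw [show (1:ℂ) + -Complex.exp (-w) = 1 - Complex.exp (-w) from by ring, norm_neg,
          norm_one, Complex.norm_exp] at htri
        have hexp : Real.exp ((-w).re) ≤ 10/11 := by
          have h1 := Real.add_one_le_exp (1/10 : ℝ)
          have h2 : Real.exp (1/10) * Real.exp (-(1/10)) = 1 := by
            rw [← Real.exp_add]; norm_num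
          have h3 : Real.exp ((-w).re) ≤ Real.exp (-(1/10)) := by
            apply Real.exp_le_exp.mpr; simp only [Complex.neg_re]; linarith
          nlinarith [Real.exp_pos ((-w).re), Real.exp_pos (-(1/10):ℝ)]
        linarith
      · -- x small, y bounded away from 0
        have hx2 : |x| ≤ 1/10 := by rw [abs_le]; constructor <;> linarith
        have hwsq : (1/4 : ℝ)^2 ≤ x^2 + y^2 := by
          have h1 : (‖w‖)^2 = x^2 + y^2 := by
            rw [Complex.sq_norm, Complex.normSq_apply, hx, hy]; ring
          nlinarith [norm_nonneg w]
        have hy2 : (2/9 : ℝ) ≤ |y| := by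
          nlinarith [abs_nonneg y, _root_.sq_abs y, _root_.sq_abs x, abs_nonneg x]
        have hcos : Real.cos y ≤ 1 - 1/100 := by
          rcases le_or_gt (|y|) π with hyp | hyp
          · have := Real.cos_le_one_sub_mul_cos_sq hyp
            have hpi : π^2 ≤ 987/100 := by
              nlinarith [Real.pi_lt_d6, Real.pi_gt_d6, Real.pi_pos]
            have h2 : 2/π^2 * y^2 ≥ 2/(987/100) * (2/9)^2 := by
              apply mul_le_mul
              · apply div_le_div_of_nonneg_left (by norm_num) (by positivity) hpi
              · nlinarith [_root_.sq_abs y]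
              · norm_num
              · positivity
            nlinarith
          · have h1 : Real.cos |y| ≤ 0 := by
              apply Real.cos_nonpos_of_pi_div_two_le_of_le
              · linarith [Real.pi_le_four, Real.pi_pos, Real.pi_gt_three]
              · nlinarith [Real.pi_gt_three]
            rw [Real.cos_abs] at h1; linarith
        have hexp1 : (9/10 : ℝ) ≤ Real.exp (-x) := by
          have := Real.add_one_le_exp (-x)
          linarith
        have hexp2 : Real.exp (-x) ≤ 51/50 := exp_small _ (by linarith)
        have hsin := Real.sin_sq_add_cos_sq y
        have expand : (1 - Real.exp (-x) * Real.cos y)^2 + (Real.exp (-x) * Real.sin y)^2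
            = (1 - Real.exp (-x))^2 + 2 * Real.exp (-x) * (1 - Real.cos y) := by
          linear_combination (Real.exp (-x))^2 * hsin
        have hprod : (9/10 : ℝ) * (1/100) ≤ Real.exp (-x) * (1 - Real.cos y) :=
          mul_le_mul hexp1 (by linarith) (by norm_num) (by linarith)
        have hfin : (1/12 : ℝ)^2 ≤ (‖1 - Complex.exp (-w)‖)^2 := by
          rw [hsq, expand]
          nlinarith [sq_nonneg (1 - Real.exp (-x))]
        nlinarith [norm_nonneg (1 - Complex.exp (-w))]
    linarith [key, habs]

lemma delta_lower (k : ℕ) (hk1 : 1 ≤ k) (hk6 : k ≤ 6) :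
    ∃ c1 > (0:ℝ), ∀ w : ℂ, -(1/100) ≤ w.re → ‖w‖ ≤ 63/20 →
      c1 * ‖w‖ ≤ ‖bdfDelta k (Complex.exp (-w))‖ := by
  obtain ⟨ε, hε, hq⟩ := q_lowerAll k hk1 hk6
  refine ⟨ε/40, by positivity, ?_⟩
  intro w hre habs
  have hexp_abs : ‖Complex.exp (-w)‖ ≤ 51/50 := by
    rw [Complex.norm_exp]
    apply exp_small
    simp only [Complex.neg_re]; linarith
  have hu1 : ‖(1 - Complex.exp (-w)) - 1‖ ≤ 51/50 := by
    rw [show (1 - Complex.exp (-w)) - 1 = -Complex.exp (-w) from by ring, norm_neg]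
    exact hexp_abs
  have hqu := hq (1 - Complex.exp (-w)) hu1
  have hulow := one_sub_exp_lower w hre habs
  rw [bdf_factor, norm_mul]
  calc ε/40 * ‖w‖ = ((1/40) * ‖w‖) * ε := by ring
    _ ≤ ‖1 - Complex.exp (-w)‖
        * ‖∑ j ∈ Finset.Icc (1:ℕ) k, (1/(j:ℂ)) * (1 - Complex.exp (-w))^(j-1)‖ := by
        apply mul_le_mul hulow hqu (le_of_lt hε)
          (norm_nonneg _)

set_option maxHeartbeats 1000000 in
lemma delta_err (k : ℕ) (hk1 : 1 ≤ k) (hk6 : k ≤ 6) (M : ℝ) (hM : 63/20 ≤ M) :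
    ∃ C > (0:ℝ), ∀ w : ℂ, -(1/100) ≤ w.re → ‖w‖ ≤ M →
      ‖bdfDelta k (Complex.exp (-w)) - w‖ ≤ C * ‖w‖^(k+1) := by
  refine ⟨(450 + M) * 4^(k+1), by positivity, ?_⟩
  intro w hre habs
  set u : ℂ := 1 - Complex.exp (-w) with hu
  rcases le_or_gt (‖w‖) (1/4) with hs | hb
  · -- small case: log series
    have hu2 : ‖u‖ ≤ 2 * ‖w‖ := by
      rw [show u = -(Complex.exp (-w) - 1) from by ring, norm_neg]
      have h := Complex.norm_exp_sub_one_le (x := -w) (by rw [norm_neg]; linarith)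
      rw [norm_neg] at h
      exact h
    have hu12 : ‖u‖ ≤ 1/2 := by linarith
    have hlt1 : ‖u‖ < 1 := by linarith
    have him : |w.im| ≤ 1/4 := le_trans (Complex.abs_im_le_norm w) hs
    have hsum : HasSum (fun n : ℕ => u^n / n) w := by
      have H := Complex.hasSum_taylorSeries_neg_log hlt1
      have e0 : (1 : ℂ) - u = Complex.exp (-w) := by rw [hu]; ring
      rw [e0] at H
      have c1 : -π < (-w).im := by
        simp only [Complex.neg_im]
        nlinarith [Real.pi_gt_three, abs_le.mp him]
      have c2 : (-w).im ≤ π := by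
        simp only [Complex.neg_im]
        nlinarith [Real.pi_gt_three, abs_le.mp him]
      rw [Complex.log_exp c1 c2] at H
      simpa using H
    set S : ℂ := ∑ n ∈ Finset.range (k+1), u^n / n with hS
    have hpart : bdfDelta k (Complex.exp (-w)) = S := by
      rw [bdfDelta, hS]
      rw [show Finset.range (k+1) = insert 0 (Finset.Icc 1 k) from by
        ext a; simp [Nat.lt_succ_iff]; omega]
      rw [Finset.sum_insert (by simp)]
      simp only [pow_zero, Nat.cast_zero, div_zero, zero_add]
      exact Finset.sum_congr rfl fun j _ => by rw [mul_comm, mul_one_div]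
    have tail : HasSum (fun n : ℕ => u^(n + (k+1)) / (n + (k+1) : ℕ)) (w - S) := by
      apply (hasSum_nat_add_iff (f := fun n : ℕ => u^n / n) (k+1)).2
      rw [sub_add_cancel]
      exact hsum
    have hbound : ∀ n : ℕ, ‖u^(n + (k+1)) / ((n + (k+1) : ℕ) : ℂ)‖
        ≤ (1/2 : ℝ)^n * ‖u‖^(k+1) := by
      intro n
      rw [norm_div, Complex.norm_natCast, norm_pow]
      have h1 : (1:ℝ) ≤ (n + (k+1) : ℕ) := by exact_mod_cast Nat.one_le_iff_ne_zero.mpr (by omega)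
      have h2 : ‖u‖ ^ (n + (k+1)) / ((n + (k+1) : ℕ) : ℝ)
          ≤ ‖u‖ ^ (n + (k+1)) := by
        apply div_le_self (by positivity) h1
      refine le_trans h2 ?_
      rw [pow_add]
      apply mul_le_mul_of_nonneg_right _ (by positivity)
      exact pow_le_pow_left₀ (norm_nonneg u) hu12 n
    have hgs : Summable (fun n : ℕ => (1/2 : ℝ)^n * ‖u‖^(k+1)) :=
      (summable_geometric_of_lt_one (by norm_num) (by norm_num)).mul_right _
    have hsn : Summable (fun n : ℕ => ‖u^(n + (k+1)) / ((n + (k+1) : ℕ) : ℂ)‖) :=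
      Summable.of_nonneg_of_le (fun n => norm_nonneg _) hbound hgs
    have h3 : ‖w - S‖ ≤ ∑' n : ℕ, (1/2 : ℝ)^n * ‖u‖^(k+1) := by
      rw [← tail.tsum_eq]
      exact le_trans (norm_tsum_le_tsum_norm hsn) (Summable.tsum_le_tsum hbound hsn hgs)
    have h4 : ∑' n : ℕ, (1/2 : ℝ)^n * ‖u‖^(k+1) = 2 * ‖u‖^(k+1) := by
      rw [tsum_mul_right, tsum_geometric_of_lt_one (by norm_num) (by norm_num)]
      norm_num
    have h5 : ‖bdfDelta k (Complex.exp (-w)) - w‖ ≤ 2 * ‖u‖^(k+1) := by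
      rw [hpart, show S - w = -(w - S) from by ring, norm_neg]
      rw [h4] at h3
      exact h3
    have h6 : ‖u‖^(k+1) ≤ 2^(k+1) * ‖w‖^(k+1) := by
      calc ‖u‖^(k+1) ≤ (2 * ‖w‖)^(k+1) :=
            pow_le_pow_left₀ (norm_nonneg u) hu2 (k+1)
        _ = 2^(k+1) * ‖w‖^(k+1) := mul_pow 2 _ (k+1)
    have h7 : (2:ℝ) * 2^(k+1) ≤ (450 + M) * 4^(k+1) := by
      have e1 : (2:ℝ)^(k+1) ≤ 4^(k+1) := pow_le_pow_left₀ (by norm_num) (by norm_num) (k+1)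
      nlinarith [pow_pos (show (0:ℝ) < 2 from by norm_num) (k+1),
        pow_pos (show (0:ℝ) < 4 from by norm_num) (k+1)]
    calc ‖bdfDelta k (Complex.exp (-w)) - w‖
        ≤ 2 * ‖u‖^(k+1) := h5
      _ ≤ 2 * (2^(k+1) * ‖w‖^(k+1)) := by
          apply mul_le_mul_of_nonneg_left h6 (by norm_num)
      _ = (2 * 2^(k+1)) * ‖w‖^(k+1) := by ring
      _ ≤ (450 + M) * 4^(k+1) * ‖w‖^(k+1) := by
          apply mul_le_mul_of_nonneg_right h7 (by positivity)
  · -- big case: crude bound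
    have hexp_abs : ‖Complex.exp (-w)‖ ≤ 51/50 := by
      rw [Complex.norm_exp]
      apply exp_small
      simp only [Complex.neg_re]; linarith
    have huabs : ‖u‖ ≤ 51/25 := by
      rw [hu]
      refine le_trans (norm_sub_le 1 (Complex.exp (-w))) ?_
      rw [norm_one]; linarith
    have hterm : ∀ j ∈ Finset.Icc (1:ℕ) k,
        ‖(1/(j:ℂ)) * (1 - Complex.exp (-w))^j‖ ≤ 73 := by
      intro j hj
      obtain ⟨hj1, hjk⟩ := Finset.mem_Icc.mp hj
      rw [norm_mul, norm_pow]
      have ha : ‖1/(j:ℂ)‖ ≤ 1 := by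
        rw [norm_div, norm_one, Complex.norm_natCast]
        rw [div_le_one (by exact_mod_cast hj1)]
        exact_mod_cast hj1
      have hb2 : ‖1 - Complex.exp (-w)‖ ^ j ≤ 73 := by
        calc ‖1 - Complex.exp (-w)‖ ^ j ≤ (51/25 : ℝ)^j := by
              apply pow_le_pow_left₀ (norm_nonneg _) (hu ▸ huabs) j
          _ ≤ (51/25 : ℝ)^6 := by
              apply pow_le_pow_right₀ (by norm_num) (le_trans hjk hk6)
          _ ≤ 73 := by norm_num
      calc ‖1/(j:ℂ)‖ * ‖1 - Complex.exp (-w)‖ ^ j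
          ≤ 1 * 73 := mul_le_mul ha hb2 (by positivity) (by norm_num)
        _ = 73 := by norm_num
    have h1 : ‖bdfDelta k (Complex.exp (-w))‖ ≤ 438 := by
      rw [bdfDelta]
      refine le_trans (norm_sum_le _ _) ?_
      refine le_trans (Finset.sum_le_card_nsmul _ _ 73 hterm) ?_
      rw [Nat.card_Icc]
      simp only [Nat.add_sub_cancel, nsmul_eq_mul]
      have : (k:ℝ) ≤ 6 := by exact_mod_cast hk6
      nlinarith
    have h2 : ‖bdfDelta k (Complex.exp (-w)) - w‖ ≤ 438 + M := by
      refine le_trans (norm_sub_le _ _) ?_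
      linarith
    have h3 : (450 + M) ≤ (450 + M) * 4^(k+1) * ‖w‖^(k+1) := by
      have e1 : ((1:ℝ)/4)^(k+1) ≤ ‖w‖^(k+1) :=
        pow_le_pow_left₀ (by norm_num) (le_of_lt hb) (k+1)
      have e2 : (450 + M) * 4^(k+1) * ((1:ℝ)/4)^(k+1) = 450 + M := by
        rw [mul_assoc, ← mul_pow]
        norm_num
      calc (450 + M) = (450 + M) * 4^(k+1) * ((1:ℝ)/4)^(k+1) := e2.symm
        _ ≤ (450 + M) * 4^(k+1) * ‖w‖^(k+1) := by
            apply mul_le_mul_of_nonneg_left e1 (by positivity)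
    linarith


set_option maxHeartbeats 2000000 in
/-- For 1 ≤ k ≤ 6 and σ > 0, on Γ^τ_{θ,κ} with κ large enough:
|δ_τ(e^{−(σ+z)τ})/δ_τ(e^{−zτ}) − (σ+z)/z|
  ≤ c·τ^k·(|σ+z|^{k+1}|z|^{−1} + |σ+z||z|^{k−1}) ≤ c·τ^k·|z|^k. -/
theorem bdfDelta_tau_quotient_error (k : ℕ) (hk1 : 1 ≤ k) (hk6 : k ≤ 6)
    (σ : ℝ) (hσ : 0 < σ) :
    ∃ θ₀ ∈ Set.Ioo (π / 2) π, ∀ θ ∈ Set.Ioc (π / 2) θ₀,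
      ∃ κ₀ > (0 : ℝ), ∀ κ : ℝ, κ₀ ≤ κ →
        ∃ c > (0 : ℝ), ∀ τ ∈ Set.Ioc (0 : ℝ) 1, κ * τ * Real.sin θ ≤ π →
          ∀ z ∈ contourTrunc θ κ τ,
            ‖(bdfDelta k (Complex.exp (-((σ : ℂ) + z) * (τ : ℂ))) / (τ : ℂ))
                  / (bdfDelta k (Complex.exp (-z * (τ : ℂ))) / (τ : ℂ))
                - ((σ : ℂ) + z) / z‖
              ≤ c * τ ^ k * (‖(σ : ℂ) + z‖ ^ (k + 1) * (‖z‖)⁻¹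
                  + ‖(σ : ℂ) + z‖ * ‖z‖ ^ (k - 1)) ∧
            ‖(bdfDelta k (Complex.exp (-((σ : ℂ) + z) * (τ : ℂ))) / (τ : ℂ))
                  / (bdfDelta k (Complex.exp (-z * (τ : ℂ))) / (τ : ℂ))
                - ((σ : ℂ) + z) / z‖
              ≤ c * τ ^ k * ‖z‖ ^ k := by
  obtain ⟨m, rfl⟩ : ∃ m, k = m + 1 := ⟨k - 1, by omega⟩
  obtain ⟨c₁, hc₁, hlow⟩ := delta_lower (m+1) hk1 hk6
  obtain ⟨C, hC, herr⟩ := delta_err (m+1) hk1 hk6 (σ + 63/20) (by linarith)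
  refine ⟨π/2 + 1/1000, ⟨by linarith [Real.pi_pos], by nlinarith [Real.pi_gt_three]⟩, ?_⟩
  rintro θ ⟨hθ1, hθ2⟩
  refine ⟨max σ 1, lt_of_lt_of_le one_pos (le_max_right σ 1), ?_⟩
  intro κ hκ
  refine ⟨(C/c₁) * (2^(m+2) + 2), mul_pos (div_pos hC hc₁) (by positivity), ?_⟩
  rintro τ ⟨hτ0, hτ1⟩ hκτ z hz
  -- θ facts
  have hθpos : 0 < θ := lt_trans (by positivity) hθ1
  have hθltπ : θ < π := by nlinarith [Real.pi_gt_three]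
  have hsθ : 0 < Real.sin θ := Real.sin_pos_of_pos_of_lt_pi hθpos hθltπ
  have hsin_lb : (999/1000 : ℝ) ≤ Real.sin θ := by
    have e1 : Real.sin θ = Real.cos (θ - π/2) := (Real.cos_sub_pi_div_two θ).symm
    have e2 : Real.cos (1/1000) ≤ Real.cos (θ - π/2) :=
      Real.cos_le_cos_of_nonneg_of_le_pi (by linarith) (by nlinarith [Real.pi_gt_three])
        (by linarith)
    have e3 : (1:ℝ) - (1/1000)^2/2 ≤ Real.cos (1/1000) := Real.one_sub_sq_div_two_le_cos
    rw [e1]; nlinarith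
  have hcos_ub : Real.cos θ ≤ 0 :=
    Real.cos_nonpos_of_pi_div_two_le_of_le (le_of_lt hθ1) (by nlinarith [Real.pi_gt_three])
  have hcos_lb : -(1/1000 : ℝ) ≤ Real.cos θ := by
    have e1 : Real.cos (π/2 + 1/1000) ≤ Real.cos θ :=
      Real.cos_le_cos_of_nonneg_of_le_pi (by linarith) (by nlinarith [Real.pi_gt_three]) hθ2
    have e2 : Real.cos (π/2 + 1/1000) = -Real.sin (1/1000) := by
      rw [show π/2 + 1/1000 = 1/1000 + π/2 from by ring, Real.cos_add_pi_div_two]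
    have e3 : Real.sin (1/1000) ≤ 1/1000 := by
      calc Real.sin (1/1000) ≤ |Real.sin (1/1000)| := le_abs_self _
        _ ≤ |(1/1000 : ℝ)| := Real.abs_sin_le_abs
        _ = 1/1000 := by norm_num
    rw [e2] at e1; linarith
  have hπd : π / Real.sin θ ≤ 63/20 := by
    rw [div_le_iff₀ hsθ]
    nlinarith [Real.pi_lt_d6]
  -- contour facts
  have hκ1 : (1:ℝ) ≤ κ := le_trans (le_max_right σ 1) hκ
  have hκσ : σ ≤ κ := le_trans (le_max_left σ 1) hκ
  have hκ0 : (0:ℝ) < κ := lt_of_lt_of_le one_pos hκ1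
  obtain ⟨hzκ, hzsin, hzre⟩ : κ ≤ ‖z‖ ∧ τ * ‖z‖ ≤ π / Real.sin θ ∧
      ‖z‖ * Real.cos θ ≤ z.re := by
    rcases hz with ⟨habsz, hargz⟩ | ⟨r, hr1, hr2, hzeq⟩
    · have hz0 : z ≠ 0 := by
        intro h; rw [h, norm_zero] at habsz; linarith
      refine ⟨le_of_eq habsz.symm, ?_, ?_⟩
      · rw [habsz, le_div_iff₀ hsθ]
        calc τ * κ * Real.sin θ = κ * τ * Real.sin θ := by ring
          _ ≤ π := hκτ
      · have e1 : Real.cos θ ≤ Real.cos (Complex.arg z) := by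
          have h := Real.cos_le_cos_of_nonneg_of_le_pi (abs_nonneg z.arg) (le_of_lt hθltπ) hargz
          rwa [Real.cos_abs] at h
        have hne : ‖z‖ ≠ 0 := by
          rw [habsz]; exact ne_of_gt hκ0
        have e2 : z.re = ‖z‖ * Real.cos (Complex.arg z) := by
          rw [Complex.cos_arg hz0]
          field_simp [hne]
        rw [e2]
        exact mul_le_mul_of_nonneg_left e1 (norm_nonneg z)
    · have hr0 : (0:ℝ) < r := lt_of_lt_of_le (lt_of_lt_of_le one_pos hκ1) hr1
      have habse : ∀ s : ℝ, ‖Complex.exp ((s:ℂ) * Complex.I)‖ = 1 := by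
        intro s
        rw [Complex.norm_exp]
        simp [Complex.mul_re]
      have hre : ∀ s : ℝ, (Complex.exp ((s:ℂ) * Complex.I)).re = Real.cos s := by
        intro s
        rw [Complex.exp_re]
        simp [Complex.mul_re, Complex.mul_im]
      have habsz : ‖z‖ = r := by
        rcases hzeq with rfl | rfl
        · rw [norm_mul, Complex.norm_real, Real.norm_eq_abs, _root_.abs_of_pos hr0, habse θ]; ring
        · rw [norm_mul, Complex.norm_real, Real.norm_eq_abs, _root_.abs_of_pos hr0,
            show -(θ:ℂ) * Complex.I = ((-θ : ℝ):ℂ) * Complex.I from by push_cast; ring,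
            habse (-θ)]; ring
      have hzre : z.re = r * Real.cos θ := by
        rcases hzeq with rfl | rfl
        · rw [show ((r:ℂ) * Complex.exp ((θ:ℂ) * Complex.I)).re
              = r * (Complex.exp ((θ:ℂ) * Complex.I)).re from by simp [Complex.mul_re], hre θ]
        · rw [show -(θ:ℂ) * Complex.I = ((-θ : ℝ):ℂ) * Complex.I from by push_cast; ring]
          rw [show ((r:ℂ) * Complex.exp (((-θ:ℝ):ℂ) * Complex.I)).re
              = r * (Complex.exp (((-θ:ℝ):ℂ) * Complex.I)).re from by simp [Complex.mul_re],
            hre (-θ), Real.cos_neg]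
      refine ⟨habsz ▸ hr1, ?_, ?_⟩
      · rw [habsz, le_div_iff₀ hsθ]
        rw [le_div_iff₀ (by positivity)] at hr2
        calc τ * r * Real.sin θ = r * (τ * Real.sin θ) := by ring
          _ ≤ π := hr2
      · exact le_of_eq (by rw [habsz, hzre])
  have hA1 : (1:ℝ) ≤ ‖z‖ := le_trans hκ1 hzκ
  have hA0' : (0:ℝ) < ‖z‖ := lt_of_lt_of_le one_pos hA1
  have hz0 : z ≠ 0 := by
    intro h; rw [h, norm_zero] at hA0'; linarith
  have hAσ : σ ≤ ‖z‖ := le_trans hκσ hzκ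
  -- w and w'
  have hτc : (τ:ℂ) ≠ 0 := Complex.ofReal_ne_zero.mpr (ne_of_gt hτ0)
  have harg1 : -z * (τ:ℂ) = -(z * (τ:ℂ)) := by ring
  have harg2 : -((σ:ℂ) + z) * (τ:ℂ) = -(((σ:ℂ) + z) * (τ:ℂ)) := by ring
  rw [harg1, harg2]
  set a : ℂ := (σ:ℂ) + z with ha
  set w : ℂ := z * (τ:ℂ) with hw
  set w' : ℂ := a * (τ:ℂ) with hw'
  have hwabs : ‖w‖ = ‖z‖ * τ := by
    rw [hw, norm_mul, Complex.norm_real, Real.norm_eq_abs, _root_.abs_of_pos hτ0]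
  have hwbd : ‖w‖ ≤ 63/20 := by
    rw [hwabs]
    calc ‖z‖ * τ = τ * ‖z‖ := by ring
      _ ≤ π / Real.sin θ := hzsin
      _ ≤ 63/20 := hπd
  have hwre : -(1/100) ≤ w.re := by
    have e0 : w.re = z.re * τ := by
      rw [hw]; simp [Complex.mul_re]
    have e1 : (‖z‖ * Real.cos θ) * τ ≤ z.re * τ :=
      mul_le_mul_of_nonneg_right hzre (le_of_lt hτ0)
    have e2 : Real.cos θ * (π / Real.sin θ) ≤ Real.cos θ * (τ * ‖z‖) :=
      mul_le_mul_of_nonpos_left hzsin hcos_ub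
    have e3 : -(1/1000) * (π / Real.sin θ) ≤ Real.cos θ * (π / Real.sin θ) :=
      mul_le_mul_of_nonneg_right hcos_lb (by positivity)
    have e4 : -(1/1000) * (63/20) ≤ -(1/1000) * (π / Real.sin θ) := by nlinarith [hπd]
    rw [e0]
    nlinarith [e1, e2, e3, e4]
  have haabs : ‖a‖ ≤ σ + ‖z‖ := by
    rw [ha]
    refine le_trans (norm_add_le _ _) ?_
    rw [Complex.norm_real, Real.norm_eq_abs, _root_.abs_of_pos hσ]
  have hw'abs : ‖w'‖ = ‖a‖ * τ := by
    rw [hw', norm_mul, Complex.norm_real, Real.norm_eq_abs, _root_.abs_of_pos hτ0]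
  have hw'bd : ‖w'‖ ≤ σ + 63/20 := by
    rw [hw'abs]
    calc ‖a‖ * τ ≤ (σ + ‖z‖) * τ :=
          mul_le_mul_of_nonneg_right haabs (le_of_lt hτ0)
      _ = σ * τ + ‖z‖ * τ := by ring
      _ ≤ σ * 1 + 63/20 := by
          have := hwabs ▸ hwbd
          nlinarith
      _ = σ + 63/20 := by ring
  have hw're : -(1/100) ≤ w'.re := by
    have e0 : w'.re = (σ + z.re) * τ := by
      rw [hw', ha]; simp [Complex.mul_re, Complex.add_re, Complex.add_im]
    have e1 : w.re = z.re * τ := by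
      rw [hw]; simp [Complex.mul_re]
    rw [e0]
    nlinarith [hwre, e1]
  -- apply main lemmas
  have hEB := herr w hwre (by linarith)
  have hEA := herr w' hw're hw'bd
  have hB := hlow w hwre hwbd
  set N : ℂ := bdfDelta (m+1) (Complex.exp (-w')) with hN
  set D : ℂ := bdfDelta (m+1) (Complex.exp (-w)) with hD
  have hDlow : c₁ * (‖z‖ * τ) ≤ ‖D‖ := by
    rw [← hwabs]; exact hB
  have hDpos : 0 < ‖D‖ :=
    lt_of_lt_of_le (mul_pos hc₁ (mul_pos hA0' hτ0)) hDlow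
  have hD0 : D ≠ 0 := by
    intro h; rw [h, norm_zero] at hDpos; linarith
  have hquot : N / (τ:ℂ) / (D / (τ:ℂ)) = N / D := by
    field_simp
  rw [hquot]
  have hsplit : N / D - a / z = (N * z - D * a) / (D * z) :=
    div_sub_div N a hD0 hz0
  have hnum_eq : N * z - D * a = (N - w') * z - a * (D - w) := by
    rw [hw', hw]; ring
  have hnum_bd : ‖N * z - D * a‖
      ≤ C * ‖w'‖ ^ (m+2) * ‖z‖
        + ‖a‖ * (C * ‖w‖ ^ (m+2)) := by
    rw [hnum_eq]
    refine le_trans (norm_sub_le _ _) ?_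
    rw [norm_mul, norm_mul]
    have b1 : ‖N - w'‖ ≤ C * ‖w'‖ ^ (m+2) := hEA
    have b2 : ‖D - w‖ ≤ C * ‖w‖ ^ (m+2) := hEB
    have g1 : ‖N - w'‖ * ‖z‖
        ≤ (C * ‖w'‖ ^ (m+2)) * ‖z‖ :=
      mul_le_mul_of_nonneg_right b1 (norm_nonneg z)
    have g2 : ‖a‖ * ‖D - w‖
        ≤ ‖a‖ * (C * ‖w‖ ^ (m+2)) :=
      mul_le_mul_of_nonneg_left b2 (norm_nonneg a)
    linarith
  have hBnn : 0 ≤ ‖a‖ := norm_nonneg a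
  have hA0 : (0:ℝ) < ‖z‖ := hA0'
  have main1 : ‖N / D - a / z‖
      ≤ (C/c₁) * τ^(m+1) * (‖a‖ ^(m+2) * (‖z‖)⁻¹
          + ‖a‖ * ‖z‖ ^ m) := by
    rw [hsplit, norm_div, norm_mul]
    have hden_lb : c₁ * (‖z‖ * τ) * ‖z‖ ≤ ‖D‖ * ‖z‖ :=
      mul_le_mul_of_nonneg_right hDlow (le_of_lt hA0)
    have hden_pos : 0 < c₁ * (‖z‖ * τ) * ‖z‖ :=
      mul_pos (mul_pos hc₁ (mul_pos hA0 hτ0)) hA0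
    have step1 : ‖N * z - D * a‖ / (‖D‖ * ‖z‖)
        ≤ (C * (‖a‖ * τ) ^ (m+2) * ‖z‖
            + ‖a‖ * (C * (‖z‖ * τ) ^ (m+2)))
          / (c₁ * (‖z‖ * τ) * ‖z‖) := by
      apply div_le_div₀
      · have t1 : 0 ≤ C * (‖a‖ * τ) ^ (m+2) * ‖z‖ :=
          mul_nonneg (mul_nonneg (le_of_lt hC)
            (pow_nonneg (mul_nonneg hBnn (le_of_lt hτ0)) _)) (le_of_lt hA0)
        have t2 : 0 ≤ ‖a‖ * (C * (‖z‖ * τ) ^ (m+2)) :=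
          mul_nonneg hBnn (mul_nonneg (le_of_lt hC)
            (pow_nonneg (mul_nonneg (le_of_lt hA0) (le_of_lt hτ0)) _))
        linarith
      · rw [← hw'abs, ← hwabs]; exact hnum_bd
      · exact hden_pos
      · exact hden_lb
    refine le_trans step1 (le_of_eq ?_)
    field_simp
    ring
  have hC1 : C/c₁ ≤ (C/c₁) * (2^(m+2) + 2) := by
    have h2 : (0:ℝ) < 2^(m+2) := by positivity
    nlinarith [div_pos hC hc₁]
  have hT1nn : 0 ≤ ‖a‖ ^(m+2) * (‖z‖)⁻¹ + ‖a‖ * ‖z‖ ^ m :=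
    add_nonneg (mul_nonneg (pow_nonneg hBnn _) (inv_nonneg.mpr (le_of_lt hA0)))
      (mul_nonneg hBnn (pow_nonneg (le_of_lt hA0) _))
  constructor
  · refine le_trans main1 ?_
    apply mul_le_mul_of_nonneg_right _ hT1nn
    apply mul_le_mul_of_nonneg_right hC1 (pow_nonneg (le_of_lt hτ0) _)
  · have hB2A : ‖a‖ ≤ 2 * ‖z‖ := by
      linarith [haabs, hAσ]
    have hT1bd : ‖a‖ ^(m+2) * (‖z‖)⁻¹ + ‖a‖ * ‖z‖ ^ m
        ≤ (2^(m+2) + 2) * ‖z‖ ^(m+1) := by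
      have u1 : ‖a‖ ^(m+2) ≤ (2 * ‖z‖)^(m+2) :=
        pow_le_pow_left₀ hBnn hB2A (m+2)
      have u2 : ‖a‖ ^(m+2) * (‖z‖)⁻¹
          ≤ (2 * ‖z‖)^(m+2) * (‖z‖)⁻¹ :=
        mul_le_mul_of_nonneg_right u1 (inv_nonneg.mpr (le_of_lt hA0))
      have u3 : (2 * ‖z‖)^(m+2) * (‖z‖)⁻¹
          = 2^(m+2) * ‖z‖ ^(m+1) := by
        rw [mul_pow]
        field_simp [ne_of_gt hA0]
        ring
      have u4 : ‖a‖ * ‖z‖ ^ m ≤ 2 * ‖z‖ * ‖z‖ ^ m :=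
        mul_le_mul_of_nonneg_right hB2A (pow_nonneg (le_of_lt hA0) _)
      have u5 : 2 * ‖z‖ * ‖z‖ ^ m = 2 * ‖z‖ ^(m+1) := by ring
      rw [u3] at u2
      rw [u5] at u4
      linarith
    calc ‖N / D - a / z‖
        ≤ (C/c₁) * τ^(m+1) * (‖a‖ ^(m+2) * (‖z‖)⁻¹
            + ‖a‖ * ‖z‖ ^ m) := main1
      _ ≤ (C/c₁) * τ^(m+1) * ((2^(m+2) + 2) * ‖z‖ ^(m+1)) := by
          apply mul_le_mul_of_nonneg_left hT1bd
            (mul_nonneg (div_nonneg (le_of_lt hC) (le_of_lt hc₁)) (pow_nonneg (le_of_lt hτ0) _))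
      _ = (C/c₁) * (2^(m+2) + 2) * τ^(m+1) * ‖z‖ ^(m+1) := by ring
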